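/- Let G be a group acting on a Hilbert space H by unitary operators U_γ, and let H^G = {x ∈ H : U_γ x = x for all γ ∈ G} be the subspace of invariant vectors, with orthogonal projection P: H → H^G. Then for any f ∈ H, the projection Pf is the unique element of minimal norm in the closed convex hull of the orbit {U_γ f : γ ∈ G}. -/

import Mathlib

open scoped BigOperators

set_option maxHeartbeats 1000000

/-- Alaoglu–Birkhoff abstract ergodic theorem: if a group `Γ` acts on a Hilbert space `H`
by unitary operators `U γ`, then for any `f ∈ H` the closed convex hull of the orbit
`{U γ f}` contains a unique element of minimal norm, and this element is the orthogonal
projection of `f` onto the subspace of invariant vectors (it is invariant, and `f` minus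
it is orthogonal to every invariant vector). -/
theorem alaoglu_birkhoff
    {H : Type*} [NormedAddCommGroup H] [InnerProductSpace ℂ H] [CompleteSpace H]
    {Γ : Type*} [Group Γ] (U : Γ → H ≃ₗᵢ[ℂ] H)
    (hU : ∀ γ₁ γ₂ : Γ, ∀ x : H, U (γ₁ * γ₂) x = U γ₁ (U γ₂ x))
    (f : H) :
    ∃ m : H, m ∈ closure (convexHull ℝ (Set.range fun γ => U γ f)) ∧
      (∀ x ∈ closure (convexHull ℝ (Set.range fun γ => U γ f)), ‖m‖ ≤ ‖x‖) ∧
      (∀ m' ∈ closure (convexHull ℝ (Set.range fun γ => U γ f)),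
        (∀ x ∈ closure (convexHull ℝ (Set.range fun γ => U γ f)), ‖m'‖ ≤ ‖x‖) → m' = m) ∧
      (∀ γ : Γ, U γ m = m) ∧
      (∀ y : H, (∀ γ : Γ, U γ y = y) → inner ℂ (f - m) y = (0 : ℂ)) := by
  set S : Set H := Set.range fun γ => U γ f with hS
  set K : Set H := closure (convexHull ℝ S) with hK
  have hKconv : Convex ℝ K := (convex_convexHull ℝ S).closure
  have hKclosed : IsClosed K := isClosed_closure
  have hSsubK : S ⊆ K := (subset_convexHull ℝ S).trans subset_closure
  have hKne : K.Nonempty := ⟨U 1 f, hSsubK ⟨1, rfl⟩⟩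
  letI : InnerProductSpace ℝ H := InnerProductSpace.rclikeToReal ℂ H
  -- existence of a minimizer
  obtain ⟨m, hmK, hmmin⟩ := exists_norm_eq_iInf_of_complete_convex hKne
    hKclosed.isComplete (by exact hKconv) 0
  have hmin : ∀ x ∈ K, ‖m‖ ≤ ‖x‖ := by
    intro x hx
    have h1 : ‖(0:H) - m‖ ≤ ‖(0:H) - x‖ := by
      rw [hmmin]
      exact ciInf_le ⟨0, fun w ⟨i, hi⟩ => hi ▸ norm_nonneg _⟩ (⟨x, hx⟩ : K)
    simpa using h1
  -- uniqueness of minimizers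
  have huniq : ∀ m' ∈ K, (∀ x ∈ K, ‖m'‖ ≤ ‖x‖) → m' = m := by
    intro m' hm'K hm'min
    have he : ‖m'‖ = ‖m‖ := le_antisymm (hm'min m hmK) (hmin m' hm'K)
    have hmid : (1/2 : ℝ) • m' + (1/2 : ℝ) • m ∈ K :=
      hKconv hm'K hmK (by norm_num : (0:ℝ) ≤ 1/2) (by norm_num : (0:ℝ) ≤ 1/2)
        (by norm_num : (1/2:ℝ) + 1/2 = 1)
    have h2 : ‖m‖ ≤ ‖(1/2 : ℝ) • m' + (1/2 : ℝ) • m‖ := hmin _ hmid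
    have hpar : ‖m' + m‖ ^ 2 + ‖m' - m‖ ^ 2 = 2 * (‖m'‖ ^ 2 + ‖m‖ ^ 2) := by
      have := parallelogram_law_with_norm ℂ m' m
      nlinarith [this]
    have h3 : ‖(1/2 : ℝ) • m' + (1/2 : ℝ) • m‖ = (1/2 : ℝ) * ‖m' + m‖ := by
      rw [← smul_add, norm_smul]
      simp
    have h4 : 2 * ‖m‖ ≤ ‖m' + m‖ := by
      rw [h3] at h2; linarith
    have h5 : ‖m' - m‖ ^ 2 ≤ 0 := by nlinarith [norm_nonneg (m' + m), norm_nonneg m]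
    have : ‖m' - m‖ = 0 := le_antisymm (by nlinarith [norm_nonneg (m' - m)]) (norm_nonneg _)
    have := norm_eq_zero.mp this
    exact sub_eq_zero.mp this
  -- invariance of K under each U γ
  have hKinv : ∀ γ : Γ, ∀ x ∈ K, U γ x ∈ K := by
    intro γ
    have hpreclosed : IsClosed ((fun x : H => U γ x) ⁻¹' K) :=
      hKclosed.preimage (U γ).continuous
    have Tl : H →ₗ[ℝ] H := ((U γ).toLinearEquiv.restrictScalars ℝ : H ≃ₗ[ℝ] H)
    have hpreconv : Convex ℝ ((fun x : H => U γ x) ⁻¹' K) :=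
      hKconv.linear_preimage ((U γ).toLinearEquiv.restrictScalars ℝ : H ≃ₗ[ℝ] H).toLinearMap
    have hSsub : S ⊆ (fun x : H => U γ x) ⁻¹' K := by
      rintro _ ⟨γ', rfl⟩
      exact hSsubK ⟨γ * γ', hU γ γ' f⟩
    have : K ⊆ (fun x : H => U γ x) ⁻¹' K :=
      closure_minimal (convexHull_min hSsub hpreconv) hpreclosed
    exact fun x hx => this hx
  have hinv : ∀ γ : Γ, U γ m = m := by
    intro γ
    refine huniq (U γ m) (hKinv γ m hmK) ?_
    intro x hx
    rw [(U γ).norm_map]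
    exact hmin x hx
  refine ⟨m, hmK, hmin, huniq, hinv, ?_⟩
  -- orthogonality
  intro y hy
  have hconst : ∀ x ∈ K, (inner ℂ y x : ℂ) = inner ℂ y f := by
    have hA : K ⊆ {x : H | (inner ℂ y x : ℂ) = inner ℂ y f} := by
      have hclosed : IsClosed {x : H | (inner ℂ y x : ℂ) = inner ℂ y f} :=
        isClosed_eq (innerSL ℂ y).continuous continuous_const
      have hconv : Convex ℝ {x : H | (inner ℂ y x : ℂ) = inner ℂ y f} := by
        have : {x : H | (inner ℂ y x : ℂ) = inner ℂ y f} =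
            ((innerSL ℂ y).toLinearMap.restrictScalars ℝ) ⁻¹' {(inner ℂ y f : ℂ)} := by
          ext x; simp [Set.mem_preimage]
        rw [this]
        exact (convex_singleton _).linear_preimage _
      have hSsub : S ⊆ {x : H | (inner ℂ y x : ℂ) = inner ℂ y f} := by
        rintro _ ⟨γ', rfl⟩
        have := (U γ').inner_map_map y f
        rw [hy γ'] at this
        exact this
      exact closure_minimal (convexHull_min hSsub hconv) hclosed
    exact fun x hx => hA hx
  have hm : (inner ℂ y m : ℂ) = inner ℂ y f := hconst m hmK
  rw [inner_sub_left]
  rw [← inner_conj_symm f y, ← inner_conj_symm m y, hm, sub_self]
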